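/- Assume W : ℝ^d → ℝ ∪ {+∞} satisfies Hypotheses (H1), (H2) and (H3a). Then the following three conditions are equivalent: W is unstable; W is discretely unstable; W is H-unstable. -/

import Mathlib

open MeasureTheory Filter Topology
open scoped ENNReal NNReal

/-- The nonnegative part of an extended real, as a value in `ℝ≥0∞`. -/
noncomputable def erealToENNReal (a : EReal) : ℝ≥0∞ :=
  if a = ⊤ then ⊤ else ENNReal.ofReal a.toReal

noncomputable section

/-- Euclidean space ℝ^d. -/
abbrev Euc (d : ℕ) : Type := EuclideanSpace ℝ (Fin d)

/-- Signed integral of an `EReal`-valued function (positive part minus negative part). -/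
noncomputable def eintegral {α : Type*} [MeasurableSpace α] (μ : Measure α) (f : α → EReal) :
    EReal :=
  ((∫⁻ x, erealToENNReal (f x) ∂μ : ℝ≥0∞) : EReal) -
    ((∫⁻ x, erealToENNReal (-f x) ∂μ : ℝ≥0∞) : EReal)

/-- Continuum interaction energy `E(ρ) = (1/2) ∬ W(x−y) dρ(x) dρ(y)`. -/
noncomputable def contEnergy {d : ℕ} (W : Euc d → EReal) (ρ : Measure (Euc d)) : EReal :=
  (((1 : ℝ) / 2 : ℝ) : EReal) * eintegral (ρ.prod ρ) fun p => W (p.1 - p.2)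

/-- Discrete interaction energy `E_N(X) = (1/(2N²)) Σ_{i≠j} W(x_i − x_j)`. -/
noncomputable def discEnergy {d : ℕ} (W : Euc d → EReal) (N : ℕ) (X : Fin N → Euc d) : EReal :=
  (((1 : ℝ) / (2 * (N : ℝ) ^ 2) : ℝ) : EReal) *
    ∑ i : Fin N, ∑ j ∈ Finset.univ.erase i, W (X i - X j)

/-- `P_i(X) = (1/N) Σ_{j≠i} W(x_i − x_j)`, the potential felt by particle `i`. -/
noncomputable def particlePotential {d : ℕ} (W : Euc d → EReal) (N : ℕ) (X : Fin N → Euc d)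
    (i : Fin N) : EReal :=
  (((N : ℝ)⁻¹ : ℝ) : EReal) * ∑ j ∈ Finset.univ.erase i, W (X i - X j)

/-- Empirical measure `μ_X = (1/N) Σ δ_{x_i}`. -/
noncomputable def empMeasure {d N : ℕ} (X : Fin N → Euc d) : Measure (Euc d) :=
  (N : ℝ≥0∞)⁻¹ • ∑ i : Fin N, Measure.dirac (X i)

/-- `X` is a global minimiser of the discrete energy `E_N`. -/
def IsDiscMinimiser {d : ℕ} (W : Euc d → EReal) (N : ℕ) (X : Fin N → Euc d) : Prop :=
  ∀ Y : Fin N → Euc d, discEnergy W N X ≤ discEnergy W N Y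

/-- `ρ` is a Borel probability measure minimising the continuum energy over all
Borel probability measures. -/
def IsContMinimiser {d : ℕ} (W : Euc d → EReal) (ρ : Measure (Euc d)) : Prop :=
  IsProbabilityMeasure ρ ∧
    ∀ ν : Measure (Euc d), IsProbabilityMeasure ν → contEnergy W ρ ≤ contEnergy W ν

/-- Narrow convergence of a sequence of measures, in duality with bounded continuous
functions. -/
def NarrowTendsto {d : ℕ} (μ : ℕ → Measure (Euc d)) (ρ : Measure (Euc d)) : Prop :=
  ∀ f : BoundedContinuousFunction (Euc d) ℝ,
    Tendsto (fun N => ∫ x, f x ∂μ N) atTop (nhds (∫ x, f x ∂ρ))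

/-- Support of a measure. -/
def measSupport {d : ℕ} (ρ : Measure (Euc d)) : Set (Euc d) :=
  {x | ∀ r : ℝ, 0 < r → 0 < ρ (Metric.ball x r)}

/-- Average of `W` over the ball of radius `ε` centred at `x`. -/
noncomputable def ballAvg {d : ℕ} (W : Euc d → EReal) (x : Euc d) (ε : ℝ) : EReal :=
  (((volume (Metric.ball x ε)).toReal⁻¹ : ℝ) : EReal) *
    eintegral (volume.restrict (Metric.ball x ε)) W

/-- Generalised Laplacian `Δ⁰W(x) = liminf_{ε→0⁺} (2(d+2)/ε²)(⨍_{B_ε(x)} W − W(x))`. -/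
noncomputable def genLap {d : ℕ} (W : Euc d → EReal) (x : Euc d) : EReal :=
  Filter.liminf
    (fun ε : ℝ => (((2 * ((d : ℝ) + 2) / ε ^ 2) : ℝ) : EReal) * (ballAvg W x ε - W x))
    (nhdsWithin (0 : ℝ) (Set.Ioi 0))

/-- Local integrability of an `EReal`-valued function. -/
def ERealLocInt {d : ℕ} (W : Euc d → EReal) : Prop :=
  ∀ K : Set (Euc d), IsCompact K →
    (∫⁻ x in K, erealToENNReal (W x)) < ⊤ ∧ (∫⁻ x in K, erealToENNReal (-W x)) < ⊤

/-- `W` is β-repulsive at the origin. -/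
def BetaRepulsive {d : ℕ} (W : Euc d → EReal) (β : ℝ) : Prop :=
  ERealLocInt W ∧
    ∃ δ : ℝ, 0 < δ ∧ ∃ C : ℝ, 0 < C ∧
      (∀ x : Euc d, 0 < ‖x‖ → ‖x‖ < δ → ((C * ‖x‖ ^ (-β) : ℝ) : EReal) ≤ -genLap W x) ∧
      genLap W (0 : Euc d) = ⊥

/-- Hypothesis (H1): `W` is lower semicontinuous, bounded below by `Wmin` and locally
integrable. -/
def Hyp1 {d : ℕ} (W : Euc d → EReal) (Wmin : ℝ) : Prop :=
  LowerSemicontinuous W ∧ (∀ x, (Wmin : EReal) ≤ W x) ∧ ERealLocInt W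

/-- Hypothesis (H2): `W(x) → Winf` as `|x| → ∞`, `W` is symmetric, and `W` is radially
strictly increasing outside the ball of radius `RW > 0`. -/
def Hyp2 {d : ℕ} (W : Euc d → EReal) (Winf : EReal) (RW : ℝ) : Prop :=
  Tendsto W (cocompact (Euc d)) (nhds Winf) ∧ (∀ x, W (-x) = W x) ∧ 0 < RW ∧
    ∀ e : Euc d, ‖e‖ = 1 → ∀ r s : ℝ, RW ≤ r → r < s → W (r • e) < W (s • e)

/-- Hypothesis (H3a): `W` is bounded from above and upper semicontinuous. -/
def Hyp3a {d : ℕ} (W : Euc d → EReal) : Prop :=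
  (∃ C : ℝ, ∀ x, W x ≤ (C : EReal)) ∧ UpperSemicontinuous W

/-- Hypothesis (H3b): `W` is β-repulsive with `2 < β < d`, is `C¹` away from the origin,
and satisfies `Δ⁰W ≤ C_W`, `W(x) ≤ C_W|x|^{2−β}` and `|∇W(x)| ≤ C_W|x|^{1−β}` for `|x| ≤ 1`. -/
def Hyp3b {d : ℕ} (W : Euc d → EReal) (β C_W : ℝ) : Prop :=
  2 < β ∧ β < d ∧ 0 < C_W ∧ BetaRepulsive W β ∧
    (∃ g : Euc d → ℝ, (∀ x : Euc d, x ≠ 0 → W x = (g x : EReal)) ∧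
      ContDiffOn ℝ 1 g {(0 : Euc d)}ᶜ ∧
      ∀ x : Euc d, x ≠ 0 → ‖x‖ ≤ 1 → ‖fderiv ℝ g x‖ ≤ C_W * ‖x‖ ^ ((1 : ℝ) - β)) ∧
    (∀ x, genLap W x ≤ (C_W : EReal)) ∧
    ∀ x : Euc d, x ≠ 0 → ‖x‖ ≤ 1 → W x ≤ ((C_W * ‖x‖ ^ ((2 : ℝ) - β) : ℝ) : EReal)

/-- `W` is unstable: some probability measure has energy `< Winf/2`. -/
def Unstable {d : ℕ} (W : Euc d → EReal) (Winf : EReal) : Prop :=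
  ∃ ρ : Measure (Euc d), IsProbabilityMeasure ρ ∧
    contEnergy W ρ < (((1 : ℝ) / 2 : ℝ) : EReal) * Winf

/-- `W` is strictly stable: every probability measure has energy `> Winf/2`. -/
def StrictlyStable {d : ℕ} (W : Euc d → EReal) (Winf : EReal) : Prop :=
  ∀ ρ : Measure (Euc d), IsProbabilityMeasure ρ →
    (((1 : ℝ) / 2 : ℝ) : EReal) * Winf < contEnergy W ρ

/-- `W` is discretely unstable. -/
def DiscUnstable {d : ℕ} (W : Euc d → EReal) (Winf : EReal) : Prop :=
  ∃ s : ℝ, 0 < s ∧ ∃ Nbar : ℕ, 2 ≤ Nbar ∧ ∀ N : ℕ, Nbar < N →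
    ∃ X : Fin N → Euc d,
      discEnergy W N X < (((1 : ℝ) / 2 : ℝ) : EReal) * Winf - (s : EReal)

/-- `W` is H-unstable. -/
def HUnstable {d : ℕ} (W : Euc d → EReal) (Winf : EReal) : Prop :=
  ∀ B : ℝ, ∃ N : ℕ, 2 ≤ N ∧ ∃ X : Fin N → Euc d,
    discEnergy W N X < (((1 : ℝ) / 2 : ℝ) : EReal) * Winf - ((B / (2 * (N : ℝ)) : ℝ) : EReal)

/-- The Morrey exponent `d/q`, where `q` is the Hölder dual of `p`. -/
def morreyExp (d : ℕ) (p : ℝ≥0∞) : ℝ := (d : ℝ) * (1 - (p⁻¹).toReal)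

end

section AuxLemmas

open MeasureTheory Filter Topology
open scoped ENNReal NNReal

lemma erealToENNReal_coe (r : ℝ) : erealToENNReal (r : EReal) = ENNReal.ofReal r := by
  simp [erealToENNReal]

lemma coe_enn_toReal {x : ℝ≥0∞} (hx : x ≠ ⊤) : ((x.toReal : ℝ) : EReal) = (x : EReal) := by
  have h := EReal.coe_ennreal_ofReal (x := x.toReal)
  rw [ENNReal.ofReal_toReal hx] at h
  rw [h, max_eq_left ENNReal.toReal_nonneg]

lemma EReal.coe_fsum {ι : Type*} (s : Finset ι) (f : ι → ℝ) :
    ((∑ i ∈ s, f i : ℝ) : EReal) = ∑ i ∈ s, (f i : EReal) :=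
  map_sum (⟨⟨((↑·) : ℝ → EReal), EReal.coe_zero⟩, EReal.coe_add⟩ : ℝ →+ EReal) f s

lemma eintegral_coe_fn {α : Type*} [MeasurableSpace α] (μ : Measure α) [IsFiniteMeasure μ]
    {g : α → ℝ} (hg : Measurable g) {M : ℝ} (hM : ∀ x, |g x| ≤ M) :
    eintegral μ (fun x => (g x : EReal)) = ((∫ x, g x ∂μ : ℝ) : EReal) := by
  have hint : Integrable g μ :=
    (integrable_const M).mono' hg.aestronglyMeasurable (ae_of_all _ fun x => by
      simpa using hM x)
  have hb : ∀ h : α → ℝ, Integrable h μ → (∫⁻ x, ENNReal.ofReal (h x) ∂μ) ≠ ⊤ := by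
    intro h hh
    refine ne_of_lt (lt_of_le_of_lt ?_ hh.2)
    refine lintegral_mono fun x => ?_
    exact (ENNReal.ofReal_le_ofReal (le_abs_self _)).trans (by
      rw [Real.enorm_eq_ofReal_abs])
  have h1 := hb g hint
  have h2 := hb (fun x => -g x) hint.neg
  rw [integral_eq_lintegral_pos_part_sub_lintegral_neg_part hint]
  unfold eintegral
  simp only [← EReal.coe_neg, erealToENNReal_coe]
  rw [EReal.coe_sub, coe_enn_toReal h1, coe_enn_toReal h2]

lemma empMeasure_prob {d N : ℕ} (hN : 0 < N) (X : Fin N → Euc d) :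
    IsProbabilityMeasure (empMeasure X) := by
  constructor
  rw [empMeasure, Measure.smul_apply, Measure.finset_sum_apply]
  simp only [Measure.dirac_apply_of_mem (Set.mem_univ _), Finset.sum_const,
    Finset.card_univ, Fintype.card_fin, nsmul_eq_mul, mul_one, smul_eq_mul]
  exact ENNReal.inv_mul_cancel (by exact_mod_cast hN.ne') (by simp)

lemma integral_empMeasure {d N : ℕ} (X : Fin N → Euc d) (f : Euc d → ℝ)
    (hf : Measurable f) :
    ∫ x, f x ∂(empMeasure X) = (N : ℝ)⁻¹ * ∑ i : Fin N, f (X i) := by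
  rw [empMeasure, integral_smul_measure,
    integral_finset_sum_measure (fun i _ =>
      ⟨hf.aestronglyMeasurable, by simp [HasFiniteIntegral, lintegral_dirac' _ hf.enorm]⟩)]
  simp only [integral_dirac' _ _ hf.stronglyMeasurable, smul_eq_mul]
  congr 1
  simp [ENNReal.toReal_inv]

lemma pi_map_pair {d N : ℕ} (ρ : Measure (Euc d)) [IsProbabilityMeasure ρ]
    {i j : Fin N} (hij : i ≠ j) :
    ρ.prod ρ = (Measure.pi fun _ : Fin N => ρ).map (fun X => (X i, X j)) := by
  have hm : Measurable (fun X : Fin N → Euc d => (X i, X j)) :=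
    (measurable_pi_apply i).prodMk (measurable_pi_apply j)
  refine Measure.prod_eq fun s t hs ht => ?_
  rw [Measure.map_apply hm (hs.prod ht)]
  have hpre : (fun X : Fin N → Euc d => (X i, X j)) ⁻¹' (s ×ˢ t) =
      Set.pi Set.univ (fun k => if k = i then s else if k = j then t else Set.univ) := by
    ext X
    simp only [Set.mem_preimage, Set.mem_prod, Set.mem_pi, Set.mem_univ, true_implies]
    constructor
    · rintro ⟨h1, h2⟩ k
      by_cases hki : k = i
      · subst hki; simp [h1]
      · by_cases hkj : k = j
        · subst hkj; simp [hki, h2]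
        · simp [hki, hkj]
    · intro h
      refine ⟨?_, ?_⟩
      · have := h i; simpa using this
      · have := h j; simpa [hij.symm] using this
  rw [hpre, Measure.pi_pi]
  rw [← Finset.mul_prod_erase Finset.univ _ (Finset.mem_univ i),
    ← Finset.mul_prod_erase (Finset.univ.erase i) _
      (Finset.mem_erase.2 ⟨hij.symm, Finset.mem_univ j⟩)]
  have hone : ∀ k ∈ (Finset.univ.erase i).erase j,
      ρ (if k = i then s else if k = j then t else Set.univ) = 1 := by
    intro k hk
    rcases Finset.mem_erase.1 hk with ⟨hkj, hk'⟩
    rcases Finset.mem_erase.1 hk' with ⟨hki, -⟩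
    simp [hki, hkj]
  rw [Finset.prod_eq_one hone]
  simp [Ne.symm hij]

lemma exists_good_config {d N : ℕ} (hN : 1 ≤ N) (ρ : Measure (Euc d)) [IsProbabilityMeasure ρ]
    {w : Euc d → ℝ} (hw : Measurable w) {M : ℝ} (hM : ∀ x, |w x| ≤ M) :
    ∃ X : Fin N → Euc d, ∑ i : Fin N, ∑ j ∈ Finset.univ.erase i, w (X i - X j)
      ≤ (N : ℝ) * ((N : ℝ) - 1) * ∫ p : Euc d × Euc d, w (p.1 - p.2) ∂(ρ.prod ρ) := by
  set π := Measure.pi fun _ : Fin N => ρ with hπ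
  haveI : IsProbabilityMeasure π := Measure.pi.instIsProbabilityMeasure _
  set I := ∫ p : Euc d × Euc d, w (p.1 - p.2) ∂(ρ.prod ρ) with hI
  set F : (Fin N → Euc d) → ℝ := fun X => ∑ i : Fin N, ∑ j ∈ Finset.univ.erase i, w (X i - X j)
    with hF
  have hmterm : ∀ i j : Fin N, Measurable fun X : Fin N → Euc d => w (X i - X j) :=
    fun i j => hw.comp ((measurable_pi_apply i).sub (measurable_pi_apply j))
  have hterm : ∀ i j : Fin N, Integrable (fun X : Fin N → Euc d => w (X i - X j)) π :=
    fun i j => (integrable_const M).mono' (hmterm i j).aestronglyMeasurable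
      (ae_of_all _ fun X => by simpa using hM _)
  have hFint : Integrable F π :=
    integrable_finset_sum _ fun i _ => integrable_finset_sum _ fun j _ => hterm i j
  have hval : ∀ (i j : Fin N), i ≠ j →
      ∫ X, w (X i - X j) ∂π = I := by
    intro i j hij
    have hm : Measurable (fun X : Fin N → Euc d => (X i, X j)) :=
      (measurable_pi_apply i).prodMk (measurable_pi_apply j)
    have hg : Measurable (fun p : Euc d × Euc d => w (p.1 - p.2)) :=
      hw.comp (measurable_fst.sub measurable_snd)
    rw [hI, pi_map_pair ρ hij, integral_map hm.aemeasurable hg.aestronglyMeasurable]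
  have key : ∫ X, F X ∂π = (N : ℝ) * ((N : ℝ) - 1) * I := by
    rw [hF]
    rw [integral_finset_sum _ fun i _ => integrable_finset_sum _ fun j _ => hterm i j]
    have : ∀ i : Fin N, ∫ X, (∑ j ∈ Finset.univ.erase i, w (X i - X j)) ∂π
        = ((N : ℝ) - 1) * I := by
      intro i
      rw [integral_finset_sum _ fun j _ => hterm i j]
      have : ∀ j ∈ Finset.univ.erase i, ∫ X, w (X i - X j) ∂π = I := by
        intro j hj
        exact hval i j (Ne.symm (Finset.mem_erase.1 hj).1)
      rw [Finset.sum_congr rfl this, Finset.sum_const, Finset.card_erase_of_mem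
        (Finset.mem_univ i), Finset.card_univ, Fintype.card_fin, nsmul_eq_mul]
      push_cast [Nat.cast_sub hN]
      ring
    rw [Finset.sum_congr rfl fun i _ => this i, Finset.sum_const, Finset.card_univ,
      Fintype.card_fin, nsmul_eq_mul]
    ring
  by_contra hcon
  push_neg at hcon
  set c := (N : ℝ) * ((N : ℝ) - 1) * I with hc
  have hpos : 0 < ∫ X, (F X - c) ∂π := by
    refine (integral_pos_iff_support_of_nonneg (fun X => sub_nonneg.2 (hcon X).le)
      (hFint.sub (integrable_const c))).2 ?_
    have : Function.support (fun X => F X - c) = Set.univ := by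
      ext X; simp only [Function.mem_support, Set.mem_univ, iff_true]; exact sub_ne_zero.2 (ne_of_gt (hcon X))
    rw [this]
    simp
  rw [integral_sub hFint (integrable_const c), key, integral_const] at hpos
  simp at hpos

end AuxLemmas

/-- under (H1), (H2) and (H3a), instability, discrete instability and
H-instability are all equivalent. -/
theorem instability_equivalences_bounded_case
    {d : ℕ} (hd : 0 < d) (W : Euc d → EReal) (Wmin : ℝ) (Winf : EReal) (RW : ℝ)
    (h1 : Hyp1 W Wmin) (h2 : Hyp2 W Winf RW) (h3a : Hyp3a W) :
    (Unstable W Winf ↔ DiscUnstable W Winf) ∧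
    (DiscUnstable W Winf ↔ HUnstable W Winf) := by
  obtain ⟨hlsc, hmin, hloc⟩ := h1
  obtain ⟨⟨C, hC⟩, husc⟩ := h3a
  have hWne_top : ∀ x, W x ≠ ⊤ := fun x => ne_top_of_le_ne_top (EReal.coe_ne_top C) (hC x)
  have hWne_bot : ∀ x, W x ≠ ⊥ :=
    fun x => ((EReal.bot_lt_coe Wmin).trans_le (hmin x)).ne'
  set w : Euc d → ℝ := fun x => (W x).toReal with hwdef
  have hWw : ∀ x, W x = ((w x : ℝ) : EReal) :=
    fun x => (EReal.coe_toReal (hWne_top x) (hWne_bot x)).symm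
  have hw_meas : Measurable w := measurable_ereal_toReal.comp hlsc.measurable
  set M := max |Wmin| |C| with hMdef
  have hwlb : ∀ x, Wmin ≤ w x := by
    intro x
    have := hmin x
    rw [hWw x] at this
    exact_mod_cast this
  have hwub : ∀ x, w x ≤ C := by
    intro x
    have := hC x
    rw [hWw x] at this
    exact_mod_cast this
  have hM : ∀ x, |w x| ≤ M := by
    intro x
    rw [abs_le]
    constructor
    · have : -M ≤ Wmin := by
        have := le_max_left |Wmin| |C|
        have := neg_abs_le Wmin
        simp only [hMdef]
        linarith
      linarith [hwlb x]
    · have : C ≤ M := le_trans (le_abs_self C) (le_max_right _ _)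
      linarith [hwub x]
  -- Winf is finite
  haveI : Nonempty (Fin d) := ⟨⟨0, hd⟩⟩
  haveI : Nontrivial (Euc d) := by
    refine ⟨⟨EuclideanSpace.single ⟨0, hd⟩ (1 : ℝ), 0, fun h => ?_⟩⟩
    have := congrArg (fun v : Euc d => v ⟨0, hd⟩) h
    simp [EuclideanSpace.single_apply] at this
  have hWinf_top : Winf ≠ ⊤ :=
    ne_top_of_le_ne_top (EReal.coe_ne_top C) (le_of_tendsto h2.1 (Eventually.of_forall hC))
  have hWinf_bot : Winf ≠ ⊥ :=
    (((EReal.bot_lt_coe Wmin)).trans_le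
      (ge_of_tendsto h2.1 (Eventually.of_forall hmin))).ne'
  set winf := Winf.toReal with hwinfdef
  have hWinfeq : Winf = ((winf : ℝ) : EReal) := (EReal.coe_toReal hWinf_top hWinf_bot).symm
  -- energy formulas
  have hdisc : ∀ (N : ℕ) (X : Fin N → Euc d), discEnergy W N X =
      (((1 / (2 * (N : ℝ) ^ 2)) *
        ∑ i : Fin N, ∑ j ∈ Finset.univ.erase i, w (X i - X j) : ℝ) : EReal) := by
    intro N X
    unfold discEnergy
    simp only [hWw, ← EReal.coe_fsum, ← EReal.coe_mul]
  have hcont : ∀ ρ : Measure (Euc d), IsProbabilityMeasure ρ →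
      contEnergy W ρ = (((1 / 2 : ℝ) *
        ∫ p : Euc d × Euc d, w (p.1 - p.2) ∂(ρ.prod ρ) : ℝ) : EReal) := by
    intro ρ hρ
    haveI := hρ
    unfold contEnergy
    have hfn : (fun p : Euc d × Euc d => W (p.1 - p.2)) =
        fun p => ((w (p.1 - p.2) : ℝ) : EReal) := funext fun p => hWw _
    rw [hfn, eintegral_coe_fn (g := fun p : Euc d × Euc d => w (p.1 - p.2)) _
      (hw_meas.comp (measurable_fst.sub measurable_snd)) (fun p => hM _), ← EReal.coe_mul]
  have hUD : Unstable W Winf → DiscUnstable W Winf := by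
    rintro ⟨ρ, hρ, hE⟩
    haveI := hρ
    rw [hcont ρ hρ, hWinfeq, ← EReal.coe_mul, EReal.coe_lt_coe_iff] at hE
    set I := ∫ p : Euc d × Euc d, w (p.1 - p.2) ∂(ρ.prod ρ) with hIdef
    have hIW : I < winf := by linarith
    set s := (winf - I) / 8 with hsdef
    have hs : 0 < s := by simp only [hsdef]; linarith
    refine ⟨s, hs, max 2 (⌈|I| / s⌉₊ + 2), le_max_left _ _, ?_⟩
    intro N hN
    have hN2 : 2 ≤ N := le_trans (le_max_left _ _) hN.le
    have hN1 : 1 ≤ N := by omega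
    have hNpos : (0 : ℝ) < N := by exact_mod_cast (by omega : 0 < N)
    obtain ⟨X, hX⟩ := exists_good_config hN1 ρ hw_meas hM
    refine ⟨X, ?_⟩
    rw [hdisc N X, hWinfeq, ← EReal.coe_mul, ← EReal.coe_sub, EReal.coe_lt_coe_iff]
    set S := ∑ i : Fin N, ∑ j ∈ Finset.univ.erase i, w (X i - X j) with hSdef
    have hceil : |I| / s ≤ (N : ℝ) := by
      have h1 : |I| / s ≤ (⌈|I| / s⌉₊ : ℝ) := Nat.le_ceil _
      have h2 : (⌈|I| / s⌉₊ + 2 : ℕ) ≤ N := le_trans (le_max_right _ _) hN.le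
      have h3 : ((⌈|I| / s⌉₊ + 2 : ℕ) : ℝ) ≤ (N : ℝ) := by exact_mod_cast h2
      push_cast at h3
      linarith
    have habs : |I| ≤ s * N := by
      rw [div_le_iff₀ hs] at hceil
      linarith
    have h1 : (1 / (2 * (N : ℝ) ^ 2)) * S ≤ (1 / (2 * (N : ℝ) ^ 2)) * ((N : ℝ) * ((N : ℝ) - 1) * I) :=
      mul_le_mul_of_nonneg_left hX (by positivity)
    have h2 : (1 / (2 * (N : ℝ) ^ 2)) * ((N : ℝ) * ((N : ℝ) - 1) * I) = I / 2 - I / (2 * N) := by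
      field_simp
    have h3 : -I ≤ |I| := neg_le_abs I
    have h4 : I / 2 - I / (2 * N) ≤ I / 2 + s / 2 := by
      have : -I / (2 * N) ≤ (s * N) / (2 * N) := by
        apply div_le_div_of_nonneg_right ?_ (by positivity)
        · linarith
      have heq : (s * N) / (2 * N) = s / 2 := by
        field_simp
      rw [heq] at this
      rw [neg_div] at this
      linarith
    have h8 : winf - I = 8 * s := by rw [hsdef]; ring
    have : 1 / 2 * winf - s = I / 2 + 3 * s := by linarith
    linarith
  have hDH : DiscUnstable W Winf → HUnstable W Winf := by
    rintro ⟨s, hs, Nbar, hNbar, hD⟩ B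
    set N := max (Nbar + 1) (⌈|B| / (2 * s)⌉₊ + 2) with hNdef
    have hNgt : Nbar < N := lt_of_lt_of_le (Nat.lt_succ_self _) (le_max_left _ _)
    obtain ⟨X, hX⟩ := hD N hNgt
    have hN2 : 2 ≤ N := by omega
    refine ⟨N, hN2, X, lt_of_lt_of_le hX ?_⟩
    rw [hWinfeq, ← EReal.coe_mul, ← EReal.coe_sub, ← EReal.coe_sub, EReal.coe_le_coe_iff]
    have hNpos : (0 : ℝ) < N := by exact_mod_cast (by omega : 0 < N)
    have hceil : |B| / (2 * s) ≤ (N : ℝ) := by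
      have h1 : |B| / (2 * s) ≤ (⌈|B| / (2 * s)⌉₊ : ℝ) := Nat.le_ceil _
      have h2 : (⌈|B| / (2 * s)⌉₊ + 2 : ℕ) ≤ N := le_max_right _ _
      have h3 : ((⌈|B| / (2 * s)⌉₊ + 2 : ℕ) : ℝ) ≤ (N : ℝ) := by exact_mod_cast h2
      push_cast at h3
      linarith
    have habs : |B| ≤ 2 * s * N := by
      rw [div_le_iff₀ (by positivity)] at hceil
      linarith
    have : B / (2 * N) ≤ s := by
      rw [div_le_iff₀ (by positivity)]
      have := le_abs_self B
      nlinarith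
    linarith
  have hHU : HUnstable W Winf → Unstable W Winf := by
    intro hH
    obtain ⟨N, hN2, X, hX⟩ := hH (w 0)
    have hNpos : 0 < N := by omega
    have hNR : (0 : ℝ) < N := by exact_mod_cast hNpos
    haveI hemp := empMeasure_prob hNpos X
    refine ⟨empMeasure X, hemp, ?_⟩
    rw [hcont _ hemp, hWinfeq, ← EReal.coe_mul, EReal.coe_lt_coe_iff]
    rw [hdisc N X, hWinfeq, ← EReal.coe_mul, ← EReal.coe_sub, EReal.coe_lt_coe_iff] at hX
    set S := ∑ i : Fin N, ∑ j ∈ Finset.univ.erase i, w (X i - X j) with hSdef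
    have hg : Measurable (fun p : Euc d × Euc d => w (p.1 - p.2)) :=
      hw_meas.comp (measurable_fst.sub measurable_snd)
    have hgint : Integrable (fun p : Euc d × Euc d => w (p.1 - p.2))
        ((empMeasure X).prod (empMeasure X)) :=
      (integrable_const M).mono' hg.aestronglyMeasurable (ae_of_all _ fun p => by simpa using hM _)
    have hIemp : ∫ p : Euc d × Euc d, w (p.1 - p.2) ∂((empMeasure X).prod (empMeasure X))
        = (N : ℝ)⁻¹ * ((N : ℝ)⁻¹ * ∑ i : Fin N, ∑ j : Fin N, w (X i - X j)) := by
      rw [integral_prod _ hgint]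
      have hin : ∀ x : Euc d, ∫ y, w (x - y) ∂(empMeasure X)
          = (N : ℝ)⁻¹ * ∑ j : Fin N, w (x - X j) :=
        fun x => integral_empMeasure X _ (hw_meas.comp (measurable_const.sub measurable_id))
      simp only [hin]
      rw [integral_const_mul]
      congr 1
      rw [integral_empMeasure X (fun x => ∑ j : Fin N, w (x - X j))
        (Finset.measurable_sum _ fun j _ => hw_meas.comp (measurable_id.sub measurable_const))]
    have hdiag : ∑ i : Fin N, ∑ j : Fin N, w (X i - X j) = (N : ℝ) * w 0 + S := by
      rw [hSdef]
      have : ∀ i : Fin N, ∑ j : Fin N, w (X i - X j)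
          = w 0 + ∑ j ∈ Finset.univ.erase i, w (X i - X j) := by
        intro i
        rw [← Finset.add_sum_erase Finset.univ _ (Finset.mem_univ i), sub_self]
      rw [Finset.sum_congr rfl fun i _ => this i, Finset.sum_add_distrib, Finset.sum_const,
        Finset.card_univ, Fintype.card_fin, nsmul_eq_mul]
    rw [hIemp, hdiag]
    have heq : (1 / 2 : ℝ) * ((N : ℝ)⁻¹ * ((N : ℝ)⁻¹ * ((N : ℝ) * w 0 + S)))
        = w 0 / (2 * N) + (1 / (2 * (N : ℝ) ^ 2)) * S := by
      field_simp
    rw [heq]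
    linarith
  exact ⟨⟨hUD, fun h => hHU (hDH h)⟩, ⟨hDH, fun h => hUD (hHU h)⟩⟩
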